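/- For every nonzero real number x, the infinite product over n = 1, 2, 3, … of cos(x / 2^n) converges and equals (1/x) · ∫_0^x cos(s) ds, i.e. equals sin(x)/x. -/

import Mathlib

open Real Filter Finset Topology

private lemma hasProd_exp_of_hasSum {f : ℕ → ℝ} {a : ℝ} (h : HasSum f a) :
    HasProd (fun n => Real.exp (f n)) (Real.exp a) := by
  have := (Real.continuous_exp.continuousAt (x := a)).tendsto.comp h
  simp only [Function.comp_def, Real.exp_sum] at this
  exact this

private lemma abs_log_cos_le {t : ℝ} (ht : |t| ≤ 1) : |Real.log (Real.cos t)| ≤ t ^ 2 := by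
  have hc : 0 < Real.cos t := Real.cos_pos_of_le_one ht
  have h1 : 1 - t ^ 2 / 2 ≤ Real.cos t := Real.one_sub_sq_div_two_le_cos
  have ht2 : t ^ 2 ≤ 1 := by
    have := sq_abs t
    nlinarith [abs_nonneg t]
  have hlog_le : Real.log (Real.cos t) ≤ 0 :=
    Real.log_nonpos (by linarith) (Real.cos_le_one t)
  have hkey := Real.log_le_sub_one_of_pos (inv_pos.2 hc)
  rw [Real.log_inv] at hkey
  -- hkey : -log (cos t) ≤ (cos t)⁻¹ - 1
  have hinv : (Real.cos t)⁻¹ - 1 ≤ t ^ 2 := by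
    rw [sub_le_iff_le_add, inv_le_iff_one_le_mul₀ hc]
    nlinarith
  rw [abs_of_nonpos hlog_le]
  linarith

private lemma sin_eq_prod (x : ℝ) (n : ℕ) :
    Real.sin x = 2 ^ n * Real.sin (x / 2 ^ n) *
      ∏ i ∈ Finset.range n, Real.cos (x / 2 ^ (i + 1)) := by
  induction n with
  | zero => simp
  | succ n ih =>
    rw [Finset.prod_range_succ]
    have h2 : Real.sin (x / 2 ^ n) =
        2 * Real.sin (x / 2 ^ (n + 1)) * Real.cos (x / 2 ^ (n + 1)) := by
      rw [← Real.sin_two_mul]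
      congr 1
      rw [pow_succ]
      ring
    rw [ih, h2]
    ring

/-- Euler's identity: for every nonzero real `x`, the infinite product over `n = 1, 2, 3, …`
of `cos (x / 2^n)` converges and equals `(1/x) · ∫_0^x cos s ds`, i.e. equals `sin x / x`. -/
theorem hasProd_cos_halvings (x : ℝ) (hx : x ≠ 0) :
    HasProd (fun n : ℕ => Real.cos (x / 2 ^ (n + 1)))
        ((1 / x) * ∫ s in (0 : ℝ)..x, Real.cos s) ∧
      (1 / x) * (∫ s in (0 : ℝ)..x, Real.cos s) = Real.sin x / x := by
  have hval : (1 / x) * (∫ s in (0 : ℝ)..x, Real.cos s) = Real.sin x / x := by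
    rw [integral_cos]
    rw [Real.sin_zero, sub_zero, one_div, inv_mul_eq_div]
  refine ⟨?_, hval⟩
  rw [hval]
  -- choose N with |x| ≤ 2 ^ N
  obtain ⟨N, hN⟩ := pow_unbounded_of_one_lt |x| (one_lt_two (α := ℝ))
  -- summability of the logs of the tail
  have habs : ∀ n : ℕ, |x / 2 ^ (n + 1 + N)| ≤ 1 := by
    intro n
    rw [abs_div, abs_of_nonneg (by positivity : (0:ℝ) ≤ 2 ^ (n + 1 + N))]
    rw [div_le_one (by positivity)]
    calc |x| ≤ 2 ^ N := hN.le
      _ ≤ 2 ^ (n + 1 + N) := by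
          apply pow_le_pow_right₀ (by norm_num)
          omega
  have hsum : Summable (fun n : ℕ => Real.log (Real.cos (x / 2 ^ (n + 1 + N)))) := by
    have hb : Summable (fun n : ℕ => x ^ 2 * (1 / 2 : ℝ) ^ n) :=
      (summable_geometric_of_lt_one (by norm_num) (by norm_num)).mul_left _
    refine (Summable.of_nonneg_of_le (fun n => abs_nonneg _) (fun n => ?_) hb).of_abs
    refine (abs_log_cos_le (habs n)).trans ?_
    rw [div_pow]
    have h1 : ((2:ℝ) ^ n) ≤ ((2:ℝ) ^ (n + 1 + N)) ^ 2 := by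
      rw [← pow_mul]
      apply pow_le_pow_right₀ (by norm_num)
      omega
    calc x ^ 2 / ((2:ℝ) ^ (n + 1 + N)) ^ 2 ≤ x ^ 2 / 2 ^ n := by
          gcongr
      _ = x ^ 2 * (1 / 2 : ℝ) ^ n := by
          rw [div_pow, one_pow]
          ring
  -- multipliability
  have hcospos : ∀ n : ℕ, 0 < Real.cos (x / 2 ^ (n + 1 + N)) := fun n =>
    Real.cos_pos_of_le_one (habs n)
  have hmt : Multipliable (fun n : ℕ => Real.cos (x / 2 ^ (n + 1 + N))) := by
    refine (hasProd_exp_of_hasSum hsum.hasSum).multipliable.congr fun n => ?_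
    exact Real.exp_log (hcospos n)
  have hm : Multipliable (fun n : ℕ => Real.cos (x / 2 ^ (n + 1))) := by
    apply Multipliable.comp_nat_add (k := N)
    refine hmt.congr fun n => ?_
    have h : n + 1 + N = n + N + 1 := by omega
    rw [h]
  obtain ⟨a, ha⟩ := hm
  -- partial products tend to sin x / x
  have hu : Tendsto (fun n : ℕ => x / 2 ^ n) atTop (𝓝 0) :=
    Filter.Tendsto.div_atTop tendsto_const_nhds
      (tendsto_pow_atTop_atTop_of_one_lt (by norm_num))
  have hu' : Tendsto (fun n : ℕ => x / 2 ^ n) atTop (𝓝[≠] (0:ℝ)) := by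
    rw [tendsto_nhdsWithin_iff]
    refine ⟨hu, Eventually.of_forall fun n => ?_⟩
    simp only [Set.mem_compl_iff, Set.mem_singleton_iff]
    positivity
  have hslope : Tendsto (fun t : ℝ => Real.sin t / t) (𝓝[≠] (0:ℝ)) (𝓝 1) := by
    have hd : HasDerivAt Real.sin 1 0 := by
      simpa using Real.hasDerivAt_sin 0
    have := hasDerivAt_iff_tendsto_slope.mp hd
    refine this.congr fun t => ?_
    simp [slope_def_field]
  have hden : Tendsto (fun n : ℕ => 2 ^ n * Real.sin (x / 2 ^ n)) atTop (𝓝 x) := by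
    have h1 : Tendsto (fun n : ℕ => x * (Real.sin (x / 2 ^ n) / (x / 2 ^ n))) atTop
        (𝓝 (x * 1)) := (hslope.comp hu').const_mul x
    rw [mul_one] at h1
    refine h1.congr fun n => ?_
    have h2 : (2:ℝ) ^ n ≠ 0 := by positivity
    field_simp
  have hne : ∀ᶠ n : ℕ in atTop, 2 ^ n * Real.sin (x / 2 ^ n) ≠ 0 :=
    hden.eventually_ne hx
  have hP : Tendsto (fun n : ℕ => ∏ i ∈ Finset.range n, Real.cos (x / 2 ^ (i + 1)))
      atTop (𝓝 (Real.sin x / x)) := by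
    have hdiv : Tendsto (fun n : ℕ => Real.sin x / (2 ^ n * Real.sin (x / 2 ^ n)))
        atTop (𝓝 (Real.sin x / x)) := tendsto_const_nhds.div hden hx
    refine hdiv.congr' ?_
    filter_upwards [hne] with n hn
    rw [div_eq_iff hn, sin_eq_prod x n]
    ring
  have := tendsto_nhds_unique (ha.tendsto_prod_nat) hP
  rwa [this] at ha
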